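/- Let Σ be a positive-definite n×n covariance matrix of a Gaussian vector whose dependency graph G = (V,E) is acyclic (i.e., the inverse A = Σ⁻¹ satisfies A(i,j) = 0 iff (i,j) ∉ E for i ≠ j, and G is a forest). Then for any vertex i with degree at least 2 and any two distinct neighbors j, k of i, one has Σ(j,k) = Σ(i,j)·Σ(i,k)/Σ(i,i). -/

import Mathlib

open Matrix in

theorem stmt_0 {n : ℕ} (S : Matrix (Fin n) (Fin n) ℝ)
    (hsymm : S.IsSymm) (hpd : S.PosDef)
    (G : SimpleGraph (Fin n)) (hac : G.IsAcyclic)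
    (hE : ∀ i j : Fin n, i ≠ j → (G.Adj i j ↔ S⁻¹ i j ≠ 0))
    (i j k : Fin n) (hj : G.Adj i j) (hk : G.Adj i k) (hjk : j ≠ k) :
    S j k = S i j * S i k / S i i := by
  classical
  set A := S⁻¹ with hAdef
  have hdet : IsUnit S.det := isUnit_iff_ne_zero.mpr (ne_of_gt hpd.det_pos)
  have hAS : A * S = 1 := Matrix.nonsing_inv_mul S hdet
  have hApd : A.PosDef := hpd.inv
  have hS : ∀ a b, S a b = S b a := fun a b => hsymm.apply b a
  have hii : 0 < S i i := by
    have := hpd.dotProduct_mulVec_pos (x := Pi.single i 1) (by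
      intro hc
      have := congrFun hc i
      simp at this)
    simpa [dotProduct, Matrix.mulVec, Pi.single_apply,
      Finset.sum_ite_eq'] using this
  have hki : k ≠ i := fun e => G.irrefl (e ▸ hk)
  have hji : j ≠ i := fun e => G.irrefl (e ▸ hj)
  -- the vector w
  set u : Fin n → ℝ := S i i • (Pi.single j 1 : Fin n → ℝ) - S i j • (Pi.single i 1 : Fin n → ℝ) with hu
  set w : Fin n → ℝ := S *ᵥ u with hw
  have hwval : ∀ l, w l = S i i * S l j - S i j * S l i := by
    intro l
    simp [hw, hu, Matrix.mulVec_sub, Matrix.mulVec_smul, Matrix.mulVec_single,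
      Pi.sub_apply, Pi.smul_apply, smul_eq_mul, mul_one]
  have hAw : A *ᵥ w = u := by
    rw [hw, Matrix.mulVec_mulVec, hAS, Matrix.one_mulVec]
  have hwi : w i = 0 := by rw [hwval]; ring
  -- the component of k avoiding i
  set R : Fin n → Fin n → Prop := fun a b => G.Adj a b ∧ b ≠ i with hR
  set P : Fin n → Prop := fun l => Relation.ReflTransGen R k l with hP
  have hkP : P k := Relation.ReflTransGen.refl
  have hPi : ∀ l, P l → l ≠ i := by
    intro l hl
    induction hl with
    | refl => exact hki
    | tail _ h2 _ => exact h2.2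
  have hPstep : ∀ l, P l → ∀ m, G.Adj l m → m ≠ i → P m :=
    fun l hl m ha hm => hl.tail ⟨ha, hm⟩
  -- j is not in the component (else a cycle)
  have hjP : ¬ P j := by
    intro hjC
    have hwalk : ∀ l, P l → ∃ p : G.Walk k l, i ∉ p.support := by
      intro l hl
      induction hl with
      | refl => exact ⟨SimpleGraph.Walk.nil, by simp [Ne.symm hki]⟩
      | tail _ h2 ih =>
        obtain ⟨p, hp⟩ := ih
        refine ⟨p.concat h2.1, ?_⟩
        rw [SimpleGraph.Walk.support_concat]
        intro hmem
        rcases List.mem_append.mp hmem with h | h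
        · exact hp h
        · exact h2.2 (List.mem_singleton.mp h).symm
    obtain ⟨p, hp⟩ := hwalk j hjC
    have hq : i ∉ (p.toPath : G.Walk k j).support :=
      fun h => hp (p.support_toPath_subset h)
    have hpath2 : (SimpleGraph.Walk.cons hk (p.toPath : G.Walk k j)).IsPath :=
      (p.toPath.2).cons hq
    have := SimpleGraph.isAcyclic_iff_path_unique.mp hac
      ⟨SimpleGraph.Walk.cons hk (p.toPath : G.Walk k j), hpath2⟩
      (SimpleGraph.Path.singleton hj)
    have hkmem : k ∈ ((⟨SimpleGraph.Walk.cons hk (p.toPath : G.Walk k j), hpath2⟩ :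
        G.Path i j) : G.Walk i j).support := by
      simp [SimpleGraph.Walk.support_cons]
    rw [this] at hkmem
    simp [SimpleGraph.Path.singleton, SimpleGraph.Walk.support_cons] at hkmem
    rcases hkmem with h | h
    · exact hki h
    · exact hjk h.symm
  -- the truncated vector
  set z : Fin n → ℝ := fun l => if P l then w l else 0 with hz
  have hu0 : ∀ l, P l → u l = 0 := by
    intro l hl
    have h1 : l ≠ i := hPi l hl
    have h2 : l ≠ j := fun e => hjP (e ▸ hl)
    simp [hu, Pi.single_apply, h1, h2]
  have hAz : ∀ l, P l → (A *ᵥ z) l = 0 := by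
    intro l hl
    have h1 : (A *ᵥ z) l = (A *ᵥ w) l := by
      simp only [Matrix.mulVec, dotProduct]
      apply Finset.sum_congr rfl
      intro m _
      by_cases hm : P m
      · simp [hz, hm]
      · simp only [hz, if_neg hm]
        by_cases hmi : m = i
        · subst hmi; rw [hwi]
        · have hml : l ≠ m := fun e => hm (e ▸ hl)
          have hnadj : ¬ G.Adj l m := fun ha => hm (hPstep l hl m ha hmi)
          have hA0 : A l m = 0 := by
            by_contra hne
            exact hnadj ((hE l m hml).mpr hne)
          rw [hA0]; ring
    rw [h1, hAw]
    exact hu0 l hl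
  have hzAz : z ⬝ᵥ (A *ᵥ z) = 0 := by
    apply Finset.sum_eq_zero
    intro l _
    by_cases hl : P l
    · rw [hAz l hl]; ring
    · simp [hz, hl]
  have hz0 : z = 0 := by
    by_contra hne
    have := hApd.dotProduct_mulVec_pos hne
    rw [star_trivial, hzAz] at this
    exact lt_irrefl 0 this
  have hwk : w k = 0 := by
    have := congrFun hz0 k
    simpa [hz, hkP] using this
  have hkey : S i i * S k j - S i j * S k i = 0 := by rw [← hwval]; exact hwk
  rw [eq_div_iff (ne_of_gt hii)]
  have e1 : S k j = S j k := hS k j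
  have e2 : S k i = S i k := hS k i
  rw [e1, e2] at hkey
  linarith [hkey]
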